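/- Theorem (strong convexity of the dilatable global entropy on chains of scaled extensions of simplexes). In the simplex chain-of-scaled-extensions setup, choose the coefficients recursively as α_n := 1 and α_k := 1 + ‖ Σ_{p=k}^{n−1} α_{p+1}·‖a_p‖₀·a_{p,k} ‖_∞ for k = n−1,…,1. Then for every x = (x_1,…,x_n) ∈ (relint Δ^{s_1}) ◁^{h_1} ⋯ ◁^{h_{n−1}} (relint Δ^{s_n}) and every m ∈ ℝ^{s_1+⋯+s_n}: m^⊤ ∇²φ̃(x) m ≥ ‖m‖₂² and m^⊤ ∇²φ̃(x) m ≥ (1/M_X)·‖m‖₁², where M_X := max_{x∈X} ‖x‖₁. That is, the dilatable global entropy φ̃ is 1-strongly convex with respect to the Euclidean norm and (1/M_X)-strongly convex with respect to the ℓ₁ norm on relint X. -/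

import Mathlib

open Finset

/-! ### Auxiliary definitions and lemmas -/

/-- Coordinate projection as a continuous linear map. -/
noncomputable def proj2 {n : ℕ} (s : Fin n → ℕ) (k : Fin n) (i : Fin (s k)) :
    ((k : Fin n) → Fin (s k) → ℝ) →L[ℝ] ℝ :=
  (ContinuousLinearMap.proj (R := ℝ) (φ := fun _ : Fin (s k) => ℝ) i).comp
    (ContinuousLinearMap.proj (R := ℝ) (φ := fun k => Fin (s k) → ℝ) k)

@[simp] lemma proj2_apply {n : ℕ} (s : Fin n → ℕ) (k : Fin n) (i : Fin (s k))
    (y : (k : Fin n) → Fin (s k) → ℝ) : proj2 s k i y = y k i := rfl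

/-- The scaling functional as a continuous linear map. -/
noncomputable def Hclm {n : ℕ} (s : Fin n → ℕ)
    (a : (k : Fin n) → (q : Fin n) → Fin (s q) → ℝ)
    (k : Fin n) : ((k : Fin n) → Fin (s k) → ℝ) →L[ℝ] ℝ :=
  ∑ q ∈ Finset.univ.filter (fun q => q < k), ∑ i, a k q i • proj2 s q i

@[simp] lemma Hclm_apply {n : ℕ} (s : Fin n → ℕ)
    (a : (k : Fin n) → (q : Fin n) → Fin (s q) → ℝ)
    (k : Fin n) (y : (k : Fin n) → Fin (s k) → ℝ) :
    Hclm s a k y = ∑ q ∈ Finset.univ.filter (fun q => q < k), ∑ i, a k q i * y q i := by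
  simp [Hclm, ContinuousLinearMap.sum_apply, smul_eq_mul]

/-- Hessian of `y ↦ ∑ c_j · g(L_j y) + affine`, where `g t = t log t`. -/
lemma hessian_aux {E : Type*} [NormedAddCommGroup E] [NormedSpace ℝ E]
    {ι : Type*} (t : Finset ι) (c : ι → ℝ) (L : ι → E →L[ℝ] ℝ)
    (T : E →L[ℝ] ℝ) (κ : ℝ) (x : E) (hx : ∀ j ∈ t, L j x ≠ 0) (m m' : E) :
    iteratedFDeriv ℝ 2
      (fun y => (∑ j ∈ t, c j * (L j y * Real.log (L j y))) + (T y + κ)) x ![m, m'] =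
    ∑ j ∈ t, c j * (L j m * L j m') / L j x := by
  classical
  set f : E → ℝ := fun y => (∑ j ∈ t, c j * (L j y * Real.log (L j y))) + (T y + κ) with hf
  set D : E → (E →L[ℝ] ℝ) :=
    fun y => (∑ j ∈ t, (c j * (Real.log (L j y) + 1)) • L j) + T with hD
  set U : Set E := ⋂ j ∈ t, {y | L j y ≠ 0} with hU
  have hUopen : IsOpen U := by
    refine isOpen_biInter_finset fun j hj => ?_
    exact isOpen_compl_singleton.preimage (L j).continuous
  have hxU : x ∈ U := by
    simp only [hU, Set.mem_iInter, Set.mem_setOf_eq]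
    exact hx
  have hderiv : ∀ y ∈ U, HasFDerivAt f (D y) y := by
    intro y hy
    simp only [hU, Set.mem_iInter, Set.mem_setOf_eq] at hy
    refine HasFDerivAt.add (HasFDerivAt.fun_sum fun j hj => ?_) ((T.hasFDerivAt).add_const κ)
    have h1 : HasFDerivAt (fun y => L j y * Real.log (L j y))
        ((Real.log (L j y) + 1) • (L j)) y :=
      (Real.hasDerivAt_mul_log (hy j hj)).comp_hasFDerivAt y (L j).hasFDerivAt
    have := h1.const_mul (c j)
    rwa [smul_smul] at this
  have hev : fderiv ℝ f =ᶠ[nhds x] D :=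
    Filter.eventuallyEq_of_mem (hUopen.mem_nhds hxU) fun y hy => (hderiv y hy).fderiv
  have hB : HasFDerivAt D
      (∑ j ∈ t, ((c j * (L j x)⁻¹) • L j).smulRight (L j)) x := by
    have : HasFDerivAt (fun y => ∑ j ∈ t, (c j * (Real.log (L j y) + 1)) • L j)
        (∑ j ∈ t, ((c j * (L j x)⁻¹) • L j).smulRight (L j)) x := by
      refine HasFDerivAt.fun_sum fun j hj => ?_
      have hlog : HasFDerivAt (fun y => Real.log (L j y)) ((L j x)⁻¹ • L j) x :=
        (Real.hasDerivAt_log (hx j hj)).comp_hasFDerivAt x (L j).hasFDerivAt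
      have hσ : HasFDerivAt (fun y => c j * (Real.log (L j y) + 1))
          ((c j * (L j x)⁻¹) • L j) x := by
        have := (hlog.add_const 1).const_mul (c j)
        rwa [smul_smul] at this
      exact hσ.smul_const (L j)
    simpa [hD] using this.add_const T
  have key : iteratedFDeriv ℝ 2 f x ![m, m'] =
      (∑ j ∈ t, ((c j * (L j x)⁻¹) • L j).smulRight (L j)) m m' := by
    rw [iteratedFDeriv_two_apply]
    have : fderiv ℝ (fderiv ℝ f) x = fderiv ℝ D x := hev.fderiv_eq
    rw [Matrix.cons_val_zero, Matrix.cons_val_one, Matrix.cons_val_zero, this, hB.fderiv]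
  rw [key]
  simp only [ContinuousLinearMap.sum_apply, ContinuousLinearMap.smulRight_apply,
    ContinuousLinearMap.coe_sum', Finset.sum_apply, ContinuousLinearMap.smul_apply,
    smul_eq_mul]
  refine Finset.sum_congr rfl fun j hj => ?_
  field_simp

/-- Points of the intrinsic interior of the standard simplex have positive coordinates. -/
lemma stdSimplex_intrinsicInterior_pos {N : ℕ} (hN : 0 < N) {y : Fin N → ℝ}
    (hy : y ∈ intrinsicInterior ℝ (stdSimplex ℝ (Fin N))) : ∀ i, 0 < y i := by
  classical
  set S : Set (Fin N → ℝ) := stdSimplex ℝ (Fin N) with hS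
  have hyS : y ∈ S := intrinsicInterior_subset hy
  intro j
  by_contra hcon
  push_neg at hcon
  have hyj : y j = 0 := le_antisymm hcon (hyS.1 j)
  set z : Fin N → ℝ := fun _ => (N : ℝ)⁻¹ with hz
  have hNpos : (0:ℝ) < N := by exact_mod_cast hN
  have hzS : z ∈ S := by
    constructor
    · intro i; positivity
    · simp [hz, Finset.sum_const, Finset.card_univ]
      field_simp
  obtain ⟨u, hu, huy⟩ := mem_intrinsicInterior.1 hy
  set f : ℝ → (Fin N → ℝ) := fun t => t • (y - z) + y with hfdef
  have hmem : ∀ t : ℝ, f t ∈ affineSpan ℝ S := by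
    intro t
    have := AffineSubspace.smul_vsub_vadd_mem (affineSpan ℝ S) t
      (subset_affineSpan ℝ S hyS) (subset_affineSpan ℝ S hzS) (subset_affineSpan ℝ S hyS)
    simpa [hfdef, vsub_eq_sub, vadd_eq_add] using this
  set g : ℝ → affineSpan ℝ S := fun t => ⟨f t, hmem t⟩ with hg
  have hgcont : Continuous g := by
    apply Continuous.subtype_mk
    exact (continuous_id.smul continuous_const).add continuous_const
  have hg0 : g 0 = u := by
    apply Subtype.ext
    simp [hg, hfdef, huy]
  have hopen : IsOpen (g ⁻¹' interior ((↑) ⁻¹' S : Set (affineSpan ℝ S))) :=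
    isOpen_interior.preimage hgcont
  have h0mem : (0:ℝ) ∈ g ⁻¹' interior ((↑) ⁻¹' S : Set (affineSpan ℝ S)) := by
    simp only [Set.mem_preimage, hg0]; exact hu
  obtain ⟨ε, hε, hball⟩ := Metric.isOpen_iff.1 hopen 0 h0mem
  have htmem : (ε / 2 : ℝ) ∈ Metric.ball (0:ℝ) ε := by
    simp only [Metric.mem_ball, Real.dist_eq, sub_zero]
    rw [abs_of_pos (by linarith)]
    linarith
  have hftS : f (ε / 2) ∈ S := by
    have := hball htmem
    have h2 : g (ε/2) ∈ ((↑) ⁻¹' S : Set (affineSpan ℝ S)) := interior_subset this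
    exact h2
  have : (0:ℝ) ≤ f (ε/2) j := hftS.1 j
  have hfval : f (ε/2) j = -(ε/2) * (N:ℝ)⁻¹ := by
    simp only [hfdef, hz, Pi.add_apply, Pi.smul_apply, Pi.sub_apply, hyj, smul_eq_mul]
    ring
  rw [hfval] at this
  nlinarith [inv_pos.2 hNpos]

/-- Weighted Cauchy–Schwarz: `(∑ a·m)² ≤ (∑ a·x)·(∑ a·m²/x)`. -/
lemma cs_weighted {ι : Type*} (t : Finset ι) (A X m : ι → ℝ)
    (hA : ∀ p ∈ t, 0 ≤ A p) (hX : ∀ p ∈ t, 0 < X p) :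
    (∑ p ∈ t, A p * m p) ^ 2 ≤ (∑ p ∈ t, A p * X p) * ∑ p ∈ t, A p * (m p ^ 2 / X p) := by
  have h := Finset.sum_mul_sq_le_sq_mul_sq t
    (fun p => Real.sqrt (A p * X p)) (fun p => Real.sqrt (A p / X p) * m p)
  have e1 : ∀ p ∈ t, Real.sqrt (A p * X p) * (Real.sqrt (A p / X p) * m p) = A p * m p := by
    intro p hp
    have hx0 : X p ≠ 0 := (hX p hp).ne'
    rw [← mul_assoc, ← Real.sqrt_mul (mul_nonneg (hA p hp) (hX p hp).le)]
    have : A p * X p * (A p / X p) = A p ^ 2 := by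
      field_simp
    rw [this, Real.sqrt_sq (hA p hp)]
  have e2 : ∀ p ∈ t, Real.sqrt (A p * X p) ^ 2 = A p * X p := by
    intro p hp
    exact Real.sq_sqrt (mul_nonneg (hA p hp) (hX p hp).le)
  have e3 : ∀ p ∈ t, (Real.sqrt (A p / X p) * m p) ^ 2 = A p * (m p ^ 2 / X p) := by
    intro p hp
    rw [mul_pow, Real.sq_sqrt (div_nonneg (hA p hp) (hX p hp).le)]
    have hx0 : X p ≠ 0 := (hX p hp).ne'
    field_simp
  rw [Finset.sum_congr rfl e1, Finset.sum_congr rfl e2, Finset.sum_congr rfl e3] at h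
  exact h

/-- Cauchy–Schwarz for the ℓ¹-bound: `(∑ |m|)² ≤ (∑ x)·(∑ m²/x)`. -/
lemma cs_l1 {ι : Type*} (t : Finset ι) (X m : ι → ℝ) (hX : ∀ p ∈ t, 0 < X p) :
    (∑ p ∈ t, |m p|) ^ 2 ≤ (∑ p ∈ t, X p) * ∑ p ∈ t, m p ^ 2 / X p := by
  have h := Finset.sum_mul_sq_le_sq_mul_sq t
    (fun p => Real.sqrt (X p)) (fun p => |m p| / Real.sqrt (X p))
  have e1 : ∀ p ∈ t, Real.sqrt (X p) * (|m p| / Real.sqrt (X p)) = |m p| := by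
    intro p hp
    rw [mul_div_cancel₀]
    exact Real.sqrt_ne_zero'.2 (hX p hp)
  have e2 : ∀ p ∈ t, Real.sqrt (X p) ^ 2 = X p := fun p hp => Real.sq_sqrt (hX p hp).le
  have e3 : ∀ p ∈ t, (|m p| / Real.sqrt (X p)) ^ 2 = m p ^ 2 / X p := by
    intro p hp
    rw [div_pow, sq_abs, Real.sq_sqrt (hX p hp).le]
  rw [Finset.sum_congr rfl e1, Finset.sum_congr rfl e2, Finset.sum_congr rfl e3] at h
  exact h

/-- Exchanging the order of summation in the weighted double sum. -/
lemma swap_aux {n : ℕ} {s : Fin n → ℕ} (α : Fin n → ℝ)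
    (A : (k : Fin n) → (q : Fin n) → Fin (s q) → ℝ) (w : (q : Fin n) → Fin (s q) → ℝ) :
    ∑ k ∈ Finset.univ.filter (fun k : Fin n => k.val ≠ 0),
        α k * (∑ q ∈ Finset.univ.filter (fun q => q < k), ∑ i, A k q i * w q i)
    = ∑ q, ∑ i, (∑ k ∈ Finset.univ.filter (fun k => q < k), α k * A k q i) * w q i := by
  have l1 : ∀ k : Fin n, α k * (∑ q ∈ Finset.univ.filter (fun q => q < k), ∑ i, A k q i * w q i)
      = ∑ q : Fin n, if q < k then ∑ i, α k * (A k q i * w q i) else 0 := by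
    intro k
    rw [Finset.mul_sum, Finset.sum_filter]
    refine Finset.sum_congr rfl fun q _ => ?_
    split
    · rw [Finset.mul_sum]
    · rfl
  have r1 : ∀ (q : Fin n) (i : Fin (s q)),
      (∑ k ∈ Finset.univ.filter (fun k => q < k), α k * A k q i) * w q i
      = ∑ k : Fin n, if q < k then α k * (A k q i * w q i) else 0 := by
    intro q i
    rw [Finset.sum_mul, Finset.sum_filter]
    refine Finset.sum_congr rfl fun k _ => ?_
    split
    · ring
    · rfl
  calc ∑ k ∈ Finset.univ.filter (fun k : Fin n => k.val ≠ 0),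
        α k * (∑ q ∈ Finset.univ.filter (fun q => q < k), ∑ i, A k q i * w q i)
      = ∑ k : Fin n,
        α k * (∑ q ∈ Finset.univ.filter (fun q => q < k), ∑ i, A k q i * w q i) := by
        refine Finset.sum_subset (Finset.filter_subset _ _) fun k _ hk => ?_
        have hk0 : k.val = 0 := by simpa using hk
        have hempty : Finset.univ.filter (fun q : Fin n => q < k) = ∅ := by
          refine Finset.filter_false_of_mem fun q _ => ?_
          rw [Fin.lt_def, hk0]
          exact Nat.not_lt_zero _
        simp [hempty]
    _ = ∑ k : Fin n, ∑ q : Fin n, if q < k then ∑ i, α k * (A k q i * w q i) else 0 :=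
        Finset.sum_congr rfl fun k _ => l1 k
    _ = ∑ q : Fin n, ∑ k : Fin n, if q < k then ∑ i, α k * (A k q i * w q i) else 0 :=
        Finset.sum_comm
    _ = ∑ q : Fin n, ∑ i, (∑ k ∈ Finset.univ.filter (fun k => q < k), α k * A k q i) * w q i := by
        refine Finset.sum_congr rfl fun q _ => ?_
        calc ∑ k : Fin n, (if q < k then ∑ i, α k * (A k q i * w q i) else 0)
            = ∑ k : Fin n, ∑ i, (if q < k then α k * (A k q i * w q i) else 0) := by
              refine Finset.sum_congr rfl fun k _ => ?_
              split
              · rfl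
              · exact Finset.sum_const_zero.symm
          _ = ∑ i, ∑ k : Fin n, (if q < k then α k * (A k q i * w q i) else 0) :=
              Finset.sum_comm
          _ = ∑ i, (∑ k ∈ Finset.univ.filter (fun k => q < k), α k * A k q i) * w q i :=
              Finset.sum_congr rfl fun i _ => (r1 q i).symm

/-- **Strong convexity of the dilatable global entropy on chains of scaled extensions of
simplexes** (Theorem 4). With the coefficients chosen recursively as `α_n = 1`,
`α_k = 1 + ‖∑_{p>k} α_p·‖a_p‖₀·a_{p,k}‖_∞`, the dilatable global entropy `φ̃` satisfies,
at every point `x` of `(relint Δ^{s_1}) ◁^{h_1} ⋯ ◁^{h_{n−1}} (relint Δ^{s_n})` and in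
every direction `m`, `m^⊤ ∇²φ̃(x) m ≥ ‖m‖₂²` and `m^⊤ ∇²φ̃(x) m ≥ (1/M_X)·‖m‖₁²`, where
`M_X = max_{x∈X} ‖x‖₁`. -/
theorem simplex_chain_dge_strong_convexity
    {n : ℕ} (hn : 0 < n)
    (s : Fin n → ℕ) (hs : ∀ k, 0 < s k)
    (a : (k : Fin n) → (q : Fin n) → Fin (s q) → ℝ)
    (ha : ∀ k q, q < k → ∀ i, a k q i ∈ Set.Icc (0 : ℝ) 1)
    (H : Fin n → ((k : Fin n) → Fin (s k) → ℝ) → ℝ)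
    (hHdef : ∀ k x, H k x = ∑ q ∈ Finset.univ.filter (fun q => q < k), ∑ i, a k q i * x q i)
    (memX memRelX : ((k : Fin n) → Fin (s k) → ℝ) → Prop)
    (hmemX : ∀ x, memX x ↔ ∀ k : Fin n,
        (k.val = 0 → x k ∈ stdSimplex ℝ (Fin (s k))) ∧
        (k.val ≠ 0 → ∃ v ∈ stdSimplex ℝ (Fin (s k)), x k = H k x • v))
    (hmemRelX : ∀ x, memRelX x ↔ ∀ k : Fin n,
        (k.val = 0 → x k ∈ intrinsicInterior ℝ (stdSimplex ℝ (Fin (s k)))) ∧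
        (k.val ≠ 0 → ∃ v ∈ intrinsicInterior ℝ (stdSimplex ℝ (Fin (s k))), x k = H k x • v))
    (hH01 : ∀ x, memX x → ∀ k : Fin n, k.val ≠ 0 → 0 ≤ H k x ∧ H k x ≤ 1)
    (hHpos : ∀ x, memRelX x → ∀ k : Fin n, k.val ≠ 0 → 0 < H k x)
    (α : Fin n → ℝ)
    (hαrec : ∀ k : Fin n, α k = 1 +
        (Finset.univ.sup' (Finset.univ_nonempty_iff.mpr (Fin.pos_iff_nonempty.mp (hs k)))
          (fun i : Fin (s k) =>
            |∑ p ∈ Finset.univ.filter (fun p => k < p),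
              α p * ((∑ q ∈ Finset.univ.filter (fun q => q < p),
                  (Finset.univ.filter (fun i : Fin (s q) => a p q i ≠ 0)).card : ℕ) : ℝ)
                * a p k i|)))
    (M : ℝ)
    (hM : IsGreatest ((fun x : (k : Fin n) → Fin (s k) → ℝ => ∑ k, ∑ i, |x k i|)
        '' {x | memX x}) M)
    (φ : ((k : Fin n) → Fin (s k) → ℝ) → ℝ)
    (hφ : φ = fun x =>
      (∑ k, α k * ∑ i, x k i * Real.log (x k i))
      - (∑ k ∈ Finset.univ.filter (fun k : Fin n => k.val ≠ 0),
          α k * (H k x * Real.log (H k x)))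
      + α ⟨0, hn⟩ * Real.log ((s ⟨0, hn⟩ : ℝ))
      + ∑ k ∈ Finset.univ.filter (fun k : Fin n => k.val ≠ 0),
          α k * (H k x * Real.log ((s k : ℝ)))) :
    ∀ x, memRelX x → ∀ m : (k : Fin n) → Fin (s k) → ℝ,
      iteratedFDeriv ℝ 2 φ x ![m, m] ≥ ∑ k, ∑ i, (m k i) ^ 2 ∧
      iteratedFDeriv ℝ 2 φ x ![m, m] ≥ (1 / M) * (∑ k, ∑ i, |m k i|) ^ 2 := by
  classical
  intro x hx m
  set F : Finset (Fin n) := Finset.univ.filter (fun k : Fin n => k.val ≠ 0) with hF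
  -- basic facts about x
  have hxR : ∀ k : Fin n,
      (k.val = 0 → x k ∈ intrinsicInterior ℝ (stdSimplex ℝ (Fin (s k)))) ∧
      (k.val ≠ 0 → ∃ v ∈ intrinsicInterior ℝ (stdSimplex ℝ (Fin (s k))), x k = H k x • v) :=
    (hmemRelX x).1 hx
  have hxX : memX x := by
    rw [hmemX]
    intro k
    refine ⟨fun h0 => intrinsicInterior_subset ((hxR k).1 h0), fun h0 => ?_⟩
    obtain ⟨v, hv, hxk⟩ := (hxR k).2 h0
    exact ⟨v, intrinsicInterior_subset hv, hxk⟩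
  have hxpos : ∀ k i, 0 < x k i := by
    intro k i
    by_cases h0 : k.val = 0
    · exact stdSimplex_intrinsicInterior_pos (hs k) ((hxR k).1 h0) i
    · obtain ⟨v, hv, hxk⟩ := (hxR k).2 h0
      have hvpos := stdSimplex_intrinsicInterior_pos (hs k) hv i
      have := hHpos x hx k h0
      rw [hxk]
      simpa [smul_eq_mul] using mul_pos this hvpos
  have hxle1 : ∀ k i, x k i ≤ 1 := by
    intro k i
    by_cases h0 : k.val = 0
    · have hmem : x k ∈ stdSimplex ℝ (Fin (s k)) := ((hmemX x).1 hxX k).1 h0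
      calc x k i ≤ ∑ j, x k j := Finset.single_le_sum (fun j _ => hmem.1 j) (mem_univ i)
        _ = 1 := hmem.2
    · obtain ⟨v, hv, hxk⟩ := ((hmemX x).1 hxX k).2 h0
      have hv1 : v i ≤ 1 := by
        calc v i ≤ ∑ j, v j := Finset.single_le_sum (fun j _ => hv.1 j) (mem_univ i)
          _ = 1 := hv.2
      have hH := hH01 x hxX k h0
      rw [hxk]
      simp only [Pi.smul_apply, smul_eq_mul]
      nlinarith [hv.1 i]
  have hα1 : ∀ k, 1 ≤ α k := by
    intro k
    rw [hαrec k]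
    have h := Finset.le_sup'
      (f := fun i : Fin (s k) =>
        |∑ p ∈ Finset.univ.filter (fun p => k < p),
          α p * ((∑ q ∈ Finset.univ.filter (fun q => q < p),
              (Finset.univ.filter (fun i : Fin (s q) => a p q i ≠ 0)).card : ℕ) : ℝ)
            * a p k i|)
      (b := (⟨0, hs k⟩ : Fin (s k))) (Finset.mem_univ _)
    exact le_add_of_nonneg_right (le_trans (abs_nonneg _) h)
  -- the "H of m" value
  set Hm : Fin n → ℝ := fun k => ∑ q ∈ Finset.univ.filter (fun q => q < k), ∑ i, a k q i * m q i
    with hHm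
  -- the Hessian value
  have hval : iteratedFDeriv ℝ 2 φ x ![m, m] =
      (∑ k, ∑ i, α k * (m k i * m k i) / x k i) - ∑ k ∈ F, α k * (Hm k * Hm k) / H k x := by
    set ι : Type := (Σ k : Fin n, Fin (s k)) ⊕ Fin n with hι
    set t : Finset ι := Finset.univ.disjSum F with ht
    set c : ι → ℝ := Sum.elim (fun p => α p.1) (fun k => -α k) with hc
    set L : ι → ((k : Fin n) → Fin (s k) → ℝ) →L[ℝ] ℝ :=
      Sum.elim (fun p => proj2 s p.1 p.2) (fun k => Hclm s a k) with hL
    set T : ((k : Fin n) → Fin (s k) → ℝ) →L[ℝ] ℝ :=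
      ∑ k ∈ F, (α k * Real.log ((s k : ℝ))) • Hclm s a k with hT
    set κ : ℝ := α ⟨0, hn⟩ * Real.log ((s ⟨0, hn⟩ : ℝ)) with hκ
    have hHy : ∀ (k : Fin n) (y : (k : Fin n) → Fin (s k) → ℝ), Hclm s a k y = H k y := by
      intro k y; rw [Hclm_apply, hHdef]
    have hφeq : φ = fun y => (∑ j ∈ t, c j * (L j y * Real.log (L j y))) + (T y + κ) := by
      funext y
      rw [hφ]
      simp only [ht, hc, hL, hT, hκ, Sum.elim_inl, Sum.elim_inr,
        ContinuousLinearMap.sum_apply, ContinuousLinearMap.coe_smul', Pi.smul_apply,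
        smul_eq_mul, proj2_apply, hHy]
      rw [Finset.sum_disjSum]
      simp only [Sum.elim_inl, Sum.elim_inr, proj2_apply, hHy]
      rw [← Finset.univ_sigma_univ, Finset.sum_sigma]
      have e1 : ∑ k, α k * ∑ i, y k i * Real.log (y k i)
          = ∑ k, ∑ i, α k * (y k i * Real.log (y k i)) := by
        simp_rw [Finset.mul_sum]
      have e2 : ∑ k ∈ F, (-α k) * (H k y * Real.log (H k y))
          = - ∑ k ∈ F, α k * (H k y * Real.log (H k y)) := by
        simp [neg_mul]
      have e3 : ∑ k ∈ F, α k * Real.log ((s k : ℝ)) * H k y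
          = ∑ k ∈ F, α k * (H k y * Real.log ((s k : ℝ))) := by
        refine Finset.sum_congr rfl fun k _ => by ring
      linarith [e1, e2, e3]
    rw [hφeq]
    have hLx : ∀ j ∈ t, L j x ≠ 0 := by
      intro j hj
      rcases j with p | k
      · simp only [hL, Sum.elim_inl, proj2_apply]
        exact (hxpos p.1 p.2).ne'
      · have hk : k ∈ F := by
          rw [ht] at hj
          simpa using (Finset.mem_disjSum.1 hj)
        have hk0 : k.val ≠ 0 := (Finset.mem_filter.1 hk).2
        simp only [hL, Sum.elim_inr, hHy]
        exact (hHpos x hx k hk0).ne'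
    rw [hessian_aux t c L T κ x hLx m m]
    rw [ht, Finset.sum_disjSum]
    simp only [hc, hL, Sum.elim_inl, Sum.elim_inr, proj2_apply, hHy]
    rw [← Finset.univ_sigma_univ, Finset.sum_sigma]
    simp only [← hHdef]
    have e5 : ∑ k ∈ F, -α k * (H k m * H k m) / H k x
        = - ∑ k ∈ F, α k * (H k m * H k m) / H k x := by
      rw [← Finset.sum_neg_distrib]
      exact Finset.sum_congr rfl fun k _ => by ring
    rw [e5]
    have e6 : Hm = fun k => H k m := by
      funext k; rw [hHm, hHdef]
    rw [e6]
    ring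
  set w : (k : Fin n) → Fin (s k) → ℝ := fun k i => m k i ^ 2 / x k i with hw
  have hwnonneg : ∀ k i, 0 ≤ w k i := fun k i => div_nonneg (sq_nonneg _) (hxpos k i).le
  -- Cauchy–Schwarz bound for each k with k.val ≠ 0
  have hCS : ∀ k ∈ F, α k * (Hm k * Hm k) / H k x ≤
      α k * ∑ q ∈ Finset.univ.filter (fun q => q < k), ∑ i, a k q i * w q i := by
    intro k hk
    have hk0 : k.val ≠ 0 := (Finset.mem_filter.1 hk).2
    have hHx : 0 < H k x := hHpos x hx k hk0
    set σ : Finset (Σ q : Fin n, Fin (s q)) :=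
      (Finset.univ.filter (fun q => q < k)).sigma (fun _ => Finset.univ) with hσ
    have key := cs_weighted σ (fun p => a k p.1 p.2) (fun p => x p.1 p.2) (fun p => m p.1 p.2)
      (fun p hp => (ha k p.1 (Finset.mem_filter.1 (Finset.mem_sigma.1 hp).1).2 p.2).1)
      (fun p _ => hxpos p.1 p.2)
    have e1 : ∑ p ∈ σ, a k p.1 p.2 * m p.1 p.2 = Hm k := by
      rw [hσ, Finset.sum_sigma, hHm]
    have e2 : ∑ p ∈ σ, a k p.1 p.2 * x p.1 p.2 = H k x := by
      rw [hσ, Finset.sum_sigma, hHdef]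
    have e3 : ∑ p ∈ σ, a k p.1 p.2 * (m p.1 p.2 ^ 2 / x p.1 p.2)
        = ∑ q ∈ Finset.univ.filter (fun q => q < k), ∑ i, a k q i * w q i := by
      rw [hσ, Finset.sum_sigma, hw]
    rw [e1, e2, e3] at key
    rw [div_le_iff₀ hHx]
    have hαk : (0:ℝ) ≤ α k := le_trans zero_le_one (hα1 k)
    nlinarith [mul_le_mul_of_nonneg_left key hαk]
  -- coefficient bound
  have hcoef : ∀ (q : Fin n) (i : Fin (s q)),
      ∑ k ∈ Finset.univ.filter (fun k => q < k), α k * a k q i ≤ α q - 1 := by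
    intro q i
    set T' : ℝ := ∑ p ∈ Finset.univ.filter (fun p => q < p),
        α p * ((∑ q' ∈ Finset.univ.filter (fun q' => q' < p),
            (Finset.univ.filter (fun i : Fin (s q') => a p q' i ≠ 0)).card : ℕ) : ℝ)
          * a p q i with hT'
    have hsup : |T'| ≤ α q - 1 := by
      rw [hαrec q]
      have := Finset.le_sup'
        (f := fun i : Fin (s q) =>
          |∑ p ∈ Finset.univ.filter (fun p => q < p),
            α p * ((∑ q' ∈ Finset.univ.filter (fun q' => q' < p),
                (Finset.univ.filter (fun i : Fin (s q') => a p q' i ≠ 0)).card : ℕ) : ℝ)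
              * a p q i|)
        (b := i)
        (Finset.mem_univ i)
      rw [add_sub_cancel_left]
      exact this
    have hle : ∑ k ∈ Finset.univ.filter (fun k => q < k), α k * a k q i ≤ T' := by
      rw [hT']
      refine Finset.sum_le_sum fun p hp => ?_
      have hqp : q < p := (Finset.mem_filter.1 hp).2
      have haI := ha p q hqp i
      by_cases haz : a p q i = 0
      · simp [haz]
      · have hapos : 0 < a p q i := lt_of_le_of_ne haI.1 (Ne.symm haz)
        have hcard : (1:ℝ) ≤ ((∑ q' ∈ Finset.univ.filter (fun q' => q' < p),
            (Finset.univ.filter (fun i : Fin (s q') => a p q' i ≠ 0)).card : ℕ) : ℝ) := by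
          rw [Nat.one_le_cast]
          have h1 : 0 < (Finset.univ.filter (fun i' : Fin (s q) => a p q i' ≠ 0)).card :=
            Finset.card_pos.2 ⟨i, Finset.mem_filter.2 ⟨Finset.mem_univ i, haz⟩⟩
          have h2 := Finset.single_le_sum (s := Finset.univ.filter (fun q' => q' < p))
              (f := fun q' : Fin n =>
                (Finset.univ.filter (fun i : Fin (s q') => a p q' i ≠ 0)).card)
              (fun _ _ => Nat.zero_le _)
              (Finset.mem_filter.2 ⟨Finset.mem_univ q, hqp⟩)
          exact le_trans h1 h2
        have hαp := hα1 p
        have h3 : α p ≤ α p * ((∑ q' ∈ Finset.univ.filter (fun q' => q' < p),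
            (Finset.univ.filter (fun i : Fin (s q') => a p q' i ≠ 0)).card : ℕ) : ℝ) :=
          le_mul_of_one_le_right (by linarith) hcard
        exact mul_le_mul_of_nonneg_right h3 hapos.le
    calc ∑ k ∈ Finset.univ.filter (fun k => q < k), α k * a k q i ≤ T' := hle
      _ ≤ |T'| := le_abs_self T'
      _ ≤ α q - 1 := hsup
  -- main lower bound by ∑ w
  have hQ : ∑ k, ∑ i, w k i ≤ iteratedFDeriv ℝ 2 φ x ![m, m] := by
    rw [hval]
    have h1 : ∑ k ∈ F, α k * (Hm k * Hm k) / H k x ≤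
        ∑ q, ∑ i, (α q - 1) * w q i := by
      calc ∑ k ∈ F, α k * (Hm k * Hm k) / H k x
          ≤ ∑ k ∈ F, α k * (∑ q ∈ Finset.univ.filter (fun q => q < k), ∑ i, a k q i * w q i) :=
            Finset.sum_le_sum hCS
        _ = ∑ q, ∑ i, (∑ k ∈ Finset.univ.filter (fun k => q < k), α k * a k q i) * w q i :=
            swap_aux α a w
        _ ≤ ∑ q, ∑ i, (α q - 1) * w q i := by
            refine Finset.sum_le_sum fun q _ => Finset.sum_le_sum fun i _ => ?_
            exact mul_le_mul_of_nonneg_right (hcoef q i) (hwnonneg q i)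
    have h2 : ∑ k, ∑ i, α k * (m k i * m k i) / x k i = ∑ k, ∑ i, α k * w k i := by
      refine Finset.sum_congr rfl fun k _ => Finset.sum_congr rfl fun i _ => ?_
      rw [hw]; ring
    rw [h2]
    have h3 : ∑ k, ∑ i, α k * w k i - ∑ q, ∑ i, (α q - 1) * w q i = ∑ k, ∑ i, w k i := by
      rw [← Finset.sum_sub_distrib]
      refine Finset.sum_congr rfl fun k _ => ?_
      rw [← Finset.sum_sub_distrib]
      refine Finset.sum_congr rfl fun i _ => ?_
      ring
    linarith
  constructor
  · refine le_trans ?_ hQ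
    refine Finset.sum_le_sum fun k _ => Finset.sum_le_sum fun i _ => ?_
    simp only [hw]
    rw [le_div_iff₀ (hxpos k i)]
    calc m k i ^ 2 * x k i ≤ m k i ^ 2 * 1 :=
          mul_le_mul_of_nonneg_left (hxle1 k i) (sq_nonneg _)
      _ = m k i ^ 2 := mul_one _
  · refine le_trans ?_ hQ
    have hcs2 : (∑ k, ∑ i, |m k i|) ^ 2 ≤ (∑ k, ∑ i, x k i) * (∑ k, ∑ i, w k i) := by
      set σ2 : Finset (Σ k : Fin n, Fin (s k)) :=
        Finset.univ.sigma (fun _ => Finset.univ) with hσ2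
      have key := cs_l1 σ2
        (fun p : Σ k : Fin n, Fin (s k) => x p.1 p.2) (fun p => m p.1 p.2)
        (fun p _ => hxpos p.1 p.2)
      have e1 : ∑ p ∈ σ2, |m p.1 p.2| = ∑ k, ∑ i, |m k i| := by
        rw [hσ2, Finset.sum_sigma]
      have e2 : ∑ p ∈ σ2, x p.1 p.2 = ∑ k, ∑ i, x k i := by
        rw [hσ2, Finset.sum_sigma]
      have e3 : ∑ p ∈ σ2, m p.1 p.2 ^ 2 / x p.1 p.2 = ∑ k, ∑ i, w k i := by
        rw [hσ2, Finset.sum_sigma, hw]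
      rw [e1, e2, e3] at key
      exact key
    have hxM : ∑ k, ∑ i, x k i ≤ M := by
      have := hM.2 ⟨x, hxX, rfl⟩
      calc ∑ k, ∑ i, x k i = ∑ k, ∑ i, |x k i| := by
            refine Finset.sum_congr rfl fun k _ => Finset.sum_congr rfl fun i _ => ?_
            rw [abs_of_pos (hxpos k i)]
        _ ≤ M := this
    have hxsumpos : 0 < ∑ k, ∑ i, x k i := by
      refine Finset.sum_pos (fun k _ => Finset.sum_pos (fun i _ => hxpos k i) ?_) ?_
      · exact Finset.univ_nonempty_iff.mpr (Fin.pos_iff_nonempty.mp (hs k))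
      · exact Finset.univ_nonempty_iff.mpr (Fin.pos_iff_nonempty.mp hn)
    have hMpos : 0 < M := lt_of_lt_of_le hxsumpos hxM
    have hwsum : 0 ≤ ∑ k, ∑ i, w k i :=
      Finset.sum_nonneg fun k _ => Finset.sum_nonneg fun i _ => hwnonneg k i
    rw [div_mul_eq_mul_div, one_mul, div_le_iff₀ hMpos]
    calc (∑ k, ∑ i, |m k i|) ^ 2
        ≤ (∑ k, ∑ i, x k i) * (∑ k, ∑ i, w k i) := hcs2
      _ ≤ M * (∑ k, ∑ i, w k i) := mul_le_mul_of_nonneg_right hxM hwsum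
      _ = (∑ k, ∑ i, w k i) * M := mul_comm _ _
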